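/- The Euclidean space ℝ^16 admits a Clifford system of 9 elements; that is, there exist nine self-adjoint linear endomorphisms I_1, …, I_9 of EuclideanSpace ℝ (Fin 16) with I_α ∘ I_α = Id for every α and I_α ∘ I_β = −I_β ∘ I_α whenever α ≠ β. -/

import Mathlib

open scoped RealInnerProductSpace

def cp : Fin 9 → Fin 16 → Fin 16 :=
  ![![0, 1, 2, 3, 4, 5, 6, 7, 8, 9, 10, 11, 12, 13, 14, 15],
    ![8, 9, 10, 11, 12, 13, 14, 15, 0, 1, 2, 3, 4, 5, 6, 7],
    ![9, 8, 11, 10, 13, 12, 15, 14, 1, 0, 3, 2, 5, 4, 7, 6],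
    ![10, 11, 8, 9, 14, 15, 12, 13, 2, 3, 0, 1, 6, 7, 4, 5],
    ![11, 10, 9, 8, 15, 14, 13, 12, 3, 2, 1, 0, 7, 6, 5, 4],
    ![12, 13, 14, 15, 8, 9, 10, 11, 4, 5, 6, 7, 0, 1, 2, 3],
    ![13, 12, 15, 14, 9, 8, 11, 10, 5, 4, 7, 6, 1, 0, 3, 2],
    ![14, 15, 12, 13, 10, 11, 8, 9, 6, 7, 4, 5, 2, 3, 0, 1],
    ![15, 14, 13, 12, 11, 10, 9, 8, 7, 6, 5, 4, 3, 2, 1, 0]]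

def cs : Fin 9 → Fin 16 → ℤ :=
  ![![1, 1, 1, 1, 1, 1, 1, 1, -1, -1, -1, -1, -1, -1, -1, -1],
    ![1, 1, 1, 1, 1, 1, 1, 1, 1, 1, 1, 1, 1, 1, 1, 1],
    ![-1, 1, 1, -1, 1, -1, -1, 1, 1, -1, -1, 1, -1, 1, 1, -1],
    ![-1, -1, 1, 1, 1, 1, -1, -1, 1, 1, -1, -1, -1, -1, 1, 1],
    ![-1, 1, -1, 1, 1, -1, 1, -1, 1, -1, 1, -1, -1, 1, -1, 1],
    ![-1, -1, -1, -1, 1, 1, 1, 1, 1, 1, 1, 1, -1, -1, -1, -1],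
    ![-1, 1, -1, 1, -1, 1, -1, 1, 1, -1, 1, -1, 1, -1, 1, -1],
    ![-1, 1, 1, -1, -1, 1, 1, -1, 1, -1, -1, 1, 1, -1, -1, 1],
    ![-1, -1, 1, 1, -1, -1, 1, 1, 1, 1, -1, -1, 1, 1, -1, -1]]

lemma hp : ∀ α i, cp α (cp α i) = i := by decide
lemma hs : ∀ α i, cs α (cp α i) = cs α i := by decide
lemma hsq : ∀ α i, cs α i * cs α i = 1 := by decide
lemma hcomm : ∀ α β i, cp β (cp α i) = cp α (cp β i) := by decide
lemma hanti : ∀ α β, α ≠ β → ∀ i, cs α i * cs β (cp α i) = -(cs β i * cs α (cp β i)) := by decide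

def cliff (α : Fin 9) : EuclideanSpace ℝ (Fin 16) →ₗ[ℝ] EuclideanSpace ℝ (Fin 16) where
  toFun x := WithLp.toLp 2 (fun i => (cs α i : ℝ) * x (cp α i))
  map_add' x y := by ext i; simp [mul_add]
  map_smul' c x := by ext i; simp; ring

lemma cliff_apply (α : Fin 9) (x : EuclideanSpace ℝ (Fin 16)) (i : Fin 16) :
    cliff α x i = (cs α i : ℝ) * x (cp α i) := rfl

/-- The Euclidean space `ℝ^16` admits a Clifford system of 9 elements:
nine self-adjoint endomorphisms squaring to the identity and pairwise anti-commuting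
(the standard `Spin(9)`-structure given by the octonionic Pauli matrices). -/
theorem exists_cliffordSystem_nine_elements_on_R16 :
    ∃ I : Fin 9 → (EuclideanSpace ℝ (Fin 16) →ₗ[ℝ] EuclideanSpace ℝ (Fin 16)),
      (∀ α, ∀ x y : EuclideanSpace ℝ (Fin 16), ⟪I α x, y⟫ = ⟪x, I α y⟫) ∧
      (∀ α, I α ∘ₗ I α = LinearMap.id) ∧
      (∀ α β, α ≠ β → I α ∘ₗ I β = -(I β ∘ₗ I α)) := by
  refine ⟨cliff, ?_, ?_, ?_⟩
  · intro α x y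
    simp only [PiLp.inner_apply, RCLike.inner_apply, conj_trivial, cliff_apply]
    refine Fintype.sum_equiv (Function.Involutive.toPerm (cp α) (show Function.Involutive (cp α) from hp α)) _ _ fun i => ?_
    simp only [Function.Involutive.coe_toPerm]
    rw [hp α i, hs α i]
    ring
  · intro α
    apply LinearMap.ext; intro x
    ext i
    simp only [LinearMap.comp_apply, cliff_apply, LinearMap.id_apply, hp]
    rw [hs, ← mul_assoc, ← Int.cast_mul, hsq]
    simp
  · intro α β h
    apply LinearMap.ext; intro x
    ext i
    simp only [LinearMap.comp_apply, LinearMap.neg_apply, cliff_apply, PiLp.neg_apply]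
    rw [← mul_assoc, ← mul_assoc, ← Int.cast_mul, ← Int.cast_mul, hanti α β h, hcomm]
    push_cast
    ring
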